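/- Let F be a field and let α, β ∈ F be such that the Weierstrass curve E : y² + αxy + βy = x³ over F is nonsingular (i.e., its discriminant is nonzero). Then the point P = (0, 0) lies on E and has exact order 3 in the group of points E(F). -/

import Mathlib

open Classical in
/-- **The `m = 3` family of Table 2.** On the nonsingular Weierstrass curve
`y² + αxy + βy = x³`, the point `P = (0, 0)` is a nonsingular point of exact order 3. -/
theorem order_three_family {F : Type*} [Field F] (α β : F)
    (W : WeierstrassCurve.Affine F)
    (hW : W = { a₁ := α, a₂ := 0, a₃ := β, a₄ := 0, a₆ := 0 })
    (hΔ : W.Δ ≠ 0) :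
    ∃ h : W.Nonsingular 0 0, addOrderOf (WeierstrassCurve.Affine.Point.some _ _ h) = 3 := by
  subst hW
  open WeierstrassCurve.Affine WeierstrassCurve.Affine.Point in
  have hβ : β ≠ 0 := by
    intro h
    apply hΔ
    subst h
    simp only [WeierstrassCurve.Δ, WeierstrassCurve.b₂, WeierstrassCurve.b₄,
      WeierstrassCurve.b₆, WeierstrassCurve.b₈]
    ring
  have hE : WeierstrassCurve.Affine.Equation
      { a₁ := α, a₂ := 0, a₃ := β, a₄ := 0, a₆ := 0 } 0 0 :=
    (WeierstrassCurve.Affine.equation_zero (W := _)).mpr rfl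
  have hP := (WeierstrassCurve.Affine.equation_iff_nonsingular_of_Δ_ne_zero hΔ).mp hE
  refine ⟨hP, ?_⟩
  let W : WeierstrassCurve.Affine F := { a₁ := α, a₂ := 0, a₃ := β, a₄ := 0, a₆ := 0 }
  have hWdef : W = { a₁ := α, a₂ := 0, a₃ := β, a₄ := 0, a₆ := 0 } := rfl
  have hy : (0 : F) ≠ W.negY 0 0 := by
    simp only [WeierstrassCurve.Affine.negY, hWdef]
    simpa using hβ
  set P : W.Point := WeierstrassCurve.Affine.Point.some _ _ hP with hPdef
  have hL : W.slope 0 0 0 0 = 0 := by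
    rw [WeierstrassCurve.Affine.slope_of_Y_ne rfl hy]
    simp [hWdef]
  have hx' : W.addX 0 0 (W.slope 0 0 0 0) = 0 := by
    simp only [WeierstrassCurve.Affine.addX, hL]
    simp [hWdef]
  have hy' : W.negAddY 0 0 0 (W.slope 0 0 0 0) = 0 := by
    simp [WeierstrassCurve.Affine.negAddY, hL]
  have h2 : P + P = -WeierstrassCurve.Affine.Point.some
      _ _ (WeierstrassCurve.Affine.nonsingular_negAdd hP hP fun hxy => hy hxy.right) :=
    WeierstrassCurve.Affine.Point.add_self_of_Y_ne' hy
  have h3 : (3 : ℕ) • P = 0 := by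
    have : (3 : ℕ) • P = (P + P) + P := by
      rw [show (3 : ℕ) = 2 + 1 by rfl, add_nsmul, two_nsmul, one_nsmul]
    rw [this, h2, WeierstrassCurve.Affine.Point.neg_some]
    refine WeierstrassCurve.Affine.Point.add_of_Y_eq hx' ?_
    rw [hx', WeierstrassCurve.Affine.negY, WeierstrassCurve.Affine.negY, hy']
  have hP0 : P ≠ 0 := by
    rw [hPdef]
    exact fun h => by simp at h
  haveI : Fact (Nat.Prime 3) := ⟨by norm_num⟩
  exact addOrderOf_eq_prime h3 hP0
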